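/- The function u(x,t) = √(2M/t) g(x/√(2Mt), R) with g(z,R) = ((e^R - 1)/(2√R)) e^{-z²R} / (√π + (e^R-1) ∫_{z√R}^{∞} e^{-ξ²} dξ) and R = M/(2ν) solves the Burgers equation u_t + u u_x = ν u_{xx} for t > 0. -/

import Mathlib

open Real MeasureTheory

noncomputable def gaussTail (w : ℝ) : ℝ := ∫ ξ in Set.Ioi w, Real.exp (-(ξ ^ 2))

lemma gaussTail_def (w : ℝ) : gaussTail w = ∫ ξ in Set.Ioi w, Real.exp (-(ξ ^ 2)) := rfl

lemma gauss_integrable : Integrable (fun ξ : ℝ => Real.exp (-(ξ ^ 2))) := by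
  have := integrable_exp_neg_mul_sq (b := 1) one_pos
  simpa using this

lemma gaussTail_nonneg (w : ℝ) : 0 ≤ gaussTail w :=
  MeasureTheory.setIntegral_nonneg measurableSet_Ioi fun x _ => (Real.exp_pos _).le

lemma gaussTail_eq (w : ℝ) :
    gaussTail w = gaussTail 0 - ∫ x in (0:ℝ)..w, Real.exp (-(x ^ 2)) := by
  have h0 := intervalIntegral.integral_Iic_add_Ioi (b := (0:ℝ))
    gauss_integrable.integrableOn gauss_integrable.integrableOn
  have hw := intervalIntegral.integral_Iic_add_Ioi (b := w)
    gauss_integrable.integrableOn gauss_integrable.integrableOn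
  have hsub := intervalIntegral.integral_Iic_sub_Iic (a := (0:ℝ)) (b := w)
    gauss_integrable.integrableOn gauss_integrable.integrableOn
  simp only [gaussTail_def]
  linarith

lemma gaussTail_hasDerivAt (w : ℝ) :
    HasDerivAt gaussTail (-Real.exp (-(w ^ 2))) w := by
  have hc : Continuous (fun ξ : ℝ => Real.exp (-(ξ ^ 2))) := by continuity
  have h : HasDerivAt (fun y => ∫ x in (0:ℝ)..y, Real.exp (-(x ^ 2)))
      (Real.exp (-(w ^ 2))) w :=
    intervalIntegral.integral_hasDerivAt_right
      gauss_integrable.intervalIntegrable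
      hc.aestronglyMeasurable.stronglyMeasurableAtFilter
      hc.continuousAt
  have h2 := (hasDerivAt_const w (gaussTail 0)).fun_sub h
  have hfun : gaussTail = fun y => gaussTail 0 - ∫ x in (0:ℝ)..y, Real.exp (-(x ^ 2)) :=
    funext gaussTail_eq
  rw [hfun]
  simpa using h2

lemma whitham_deriv_x (ν c s : ℝ) (hs : s ≠ 0) (y : ℝ)
    (hP : Real.sqrt π + c * gaussTail (y / s) ≠ 0) :
    HasDerivAt (fun z => 2 * ν * c * Real.exp (-((z / s) ^ 2))
        / (s * (Real.sqrt π + c * gaussTail (z / s))))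
      (2 * ν * c * (c * Real.exp (-((y / s) ^ 2)) ^ 2
          - 2 * (y / s) * Real.exp (-((y / s) ^ 2)) * (Real.sqrt π + c * gaussTail (y / s)))
        / (s ^ 2 * (Real.sqrt π + c * gaussTail (y / s)) ^ 2)) y := by
  have hw : HasDerivAt (fun z : ℝ => z / s) (1 / s) y := by
    simpa using (hasDerivAt_id y).div_const s
  have hw2 : HasDerivAt (fun z : ℝ => (z / s) ^ 2) (2 * (y / s) * (1 / s)) y := by
    simpa using hw.fun_pow 2
  have hE0 : HasDerivAt (fun z : ℝ => Real.exp (-((z / s) ^ 2)))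
      (Real.exp (-((y / s) ^ 2)) * (-(2 * (y / s) * (1 / s)))) y := hw2.neg.exp
  have hG : HasDerivAt (fun z : ℝ => gaussTail (z / s))
      (-Real.exp (-((y / s) ^ 2)) * (1 / s)) y :=
    ((gaussTail_hasDerivAt (y / s)).comp y hw :)
  have hPd : HasDerivAt (fun z : ℝ => Real.sqrt π + c * gaussTail (z / s))
      (c * (-Real.exp (-((y / s) ^ 2)) * (1 / s))) y :=
    ((hG.const_mul c).const_add (Real.sqrt π))
  have hden : HasDerivAt (fun z : ℝ => s * (Real.sqrt π + c * gaussTail (z / s)))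
      (s * (c * (-Real.exp (-((y / s) ^ 2)) * (1 / s)))) y := hPd.const_mul s
  have hnum : HasDerivAt (fun z : ℝ => 2 * ν * c * Real.exp (-((z / s) ^ 2)))
      (2 * ν * c * (Real.exp (-((y / s) ^ 2)) * (-(2 * (y / s) * (1 / s))))) y :=
    hE0.const_mul (2 * ν * c)
  have hdiv := hnum.fun_div hden (mul_ne_zero hs hP)
  refine hdiv.congr_deriv ?_
  field_simp
  ring

lemma whitham_deriv_xx (ν c s : ℝ) (hs : s ≠ 0) (x : ℝ)
    (hP : Real.sqrt π + c * gaussTail (x / s) ≠ 0) :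
    HasDerivAt (fun y => 2 * ν * c * (c * Real.exp (-((y / s) ^ 2)) ^ 2
          - 2 * (y / s) * Real.exp (-((y / s) ^ 2)) * (Real.sqrt π + c * gaussTail (y / s)))
        / (s ^ 2 * (Real.sqrt π + c * gaussTail (y / s)) ^ 2))
      (2 * ν * c * (2 * c ^ 2 * Real.exp (-((x / s) ^ 2)) ^ 3
          - 6 * c * (x / s) * Real.exp (-((x / s) ^ 2)) ^ 2
              * (Real.sqrt π + c * gaussTail (x / s))
          + (4 * (x / s) ^ 2 - 2) * Real.exp (-((x / s) ^ 2))
              * (Real.sqrt π + c * gaussTail (x / s)) ^ 2)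
        / (s ^ 3 * (Real.sqrt π + c * gaussTail (x / s)) ^ 3)) x := by
  have hw : HasDerivAt (fun z : ℝ => z / s) (1 / s) x := by
    simpa using (hasDerivAt_id x).div_const s
  have hw2 : HasDerivAt (fun z : ℝ => (z / s) ^ 2) (2 * (x / s) * (1 / s)) x := by
    simpa using hw.fun_pow 2
  have hE0 : HasDerivAt (fun z : ℝ => Real.exp (-((z / s) ^ 2)))
      (Real.exp (-((x / s) ^ 2)) * (-(2 * (x / s) * (1 / s)))) x := hw2.neg.exp
  have hG : HasDerivAt (fun z : ℝ => gaussTail (z / s))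
      (-Real.exp (-((x / s) ^ 2)) * (1 / s)) x :=
    ((gaussTail_hasDerivAt (x / s)).comp x hw :)
  have hPd : HasDerivAt (fun z : ℝ => Real.sqrt π + c * gaussTail (z / s))
      (c * (-Real.exp (-((x / s) ^ 2)) * (1 / s))) x :=
    ((hG.const_mul c).const_add (Real.sqrt π))
  have hE0sq : HasDerivAt (fun z : ℝ => Real.exp (-((z / s) ^ 2)) ^ 2)
      (2 * Real.exp (-((x / s) ^ 2)) ^ 1
        * (Real.exp (-((x / s) ^ 2)) * (-(2 * (x / s) * (1 / s))))) x := by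
    simpa using hE0.fun_pow 2
  have ht2 : HasDerivAt (fun z : ℝ => 2 * (z / s) * Real.exp (-((z / s) ^ 2))
        * (Real.sqrt π + c * gaussTail (z / s)))
      ((2 * (1 / s) * Real.exp (-((x / s) ^ 2))
          + 2 * (x / s) * (Real.exp (-((x / s) ^ 2)) * (-(2 * (x / s) * (1 / s)))))
        * (Real.sqrt π + c * gaussTail (x / s))
        + 2 * (x / s) * Real.exp (-((x / s) ^ 2))
          * (c * (-Real.exp (-((x / s) ^ 2)) * (1 / s)))) x := by
    exact (((hw.const_mul 2).fun_mul hE0).fun_mul hPd)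
  have hnum := ((hE0sq.const_mul c).fun_sub ht2).const_mul (2 * ν * c)
  have hPsq : HasDerivAt (fun z : ℝ => (Real.sqrt π + c * gaussTail (z / s)) ^ 2)
      (2 * (Real.sqrt π + c * gaussTail (x / s)) ^ 1
        * (c * (-Real.exp (-((x / s) ^ 2)) * (1 / s)))) x := by
    simpa using hPd.fun_pow 2
  have hden := hPsq.const_mul (s ^ 2)
  have hdiv := hnum.fun_div hden (mul_ne_zero (pow_ne_zero 2 hs) (pow_ne_zero 2 hP))
  refine hdiv.congr_deriv ?_
  field_simp
  ring

lemma whitham_deriv_t (ν c x t : ℝ) (hν : 0 < ν) (ht : 0 < t)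
    (hP : Real.sqrt π + c * gaussTail (x / Real.sqrt (4 * ν * t)) ≠ 0) :
    HasDerivAt (fun τ => 2 * ν * c * Real.exp (-((x / Real.sqrt (4 * ν * τ)) ^ 2))
        / (Real.sqrt (4 * ν * τ)
            * (Real.sqrt π + c * gaussTail (x / Real.sqrt (4 * ν * τ)))))
      (4 * ν ^ 2 * c * Real.exp (-((x / Real.sqrt (4 * ν * t)) ^ 2))
          * (2 * (x / Real.sqrt (4 * ν * t)) ^ 2
                * (Real.sqrt π + c * gaussTail (x / Real.sqrt (4 * ν * t)))
              - (Real.sqrt π + c * gaussTail (x / Real.sqrt (4 * ν * t)))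
              - c * (x / Real.sqrt (4 * ν * t))
                * Real.exp (-((x / Real.sqrt (4 * ν * t)) ^ 2)))
        / (Real.sqrt (4 * ν * t) ^ 3
            * (Real.sqrt π + c * gaussTail (x / Real.sqrt (4 * ν * t))) ^ 2)) t := by
  set s := Real.sqrt (4 * ν * t) with hsdef
  have hs : 0 < s := Real.sqrt_pos.mpr (by positivity)
  have hsder : HasDerivAt (fun τ : ℝ => Real.sqrt (4 * ν * τ)) (2 * ν / s) t := by
    have h1 : HasDerivAt (fun τ : ℝ => 4 * ν * τ) (4 * ν) t := by
      simpa using (hasDerivAt_id t).const_mul (4 * ν)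
    have h2 := (Real.hasDerivAt_sqrt (by positivity : 4 * ν * t ≠ 0)).comp t h1
    refine h2.congr_deriv ?_
    rw [← hsdef]
    field_simp
    ring
  have hwder : HasDerivAt (fun τ : ℝ => x / Real.sqrt (4 * ν * τ))
      (-(2 * ν * x) / s ^ 3) t := by
    have h := (hasDerivAt_const t x).fun_div hsder hs.ne'
    refine h.congr_deriv ?_
    rw [← hsdef]
    field_simp
    ring
  have hw2 : HasDerivAt (fun τ : ℝ => (x / Real.sqrt (4 * ν * τ)) ^ 2)
      (2 * (x / s) * (-(2 * ν * x) / s ^ 3)) t := by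
    simpa [← hsdef] using hwder.fun_pow 2
  have hE0 : HasDerivAt (fun τ : ℝ => Real.exp (-((x / Real.sqrt (4 * ν * τ)) ^ 2)))
      (Real.exp (-((x / s) ^ 2)) * (-(2 * (x / s) * (-(2 * ν * x) / s ^ 3)))) t := hw2.neg.exp
  have hG : HasDerivAt (fun τ : ℝ => gaussTail (x / Real.sqrt (4 * ν * τ)))
      (-Real.exp (-((x / s) ^ 2)) * (-(2 * ν * x) / s ^ 3)) t :=
    ((gaussTail_hasDerivAt (x / s)).comp t hwder :)
  have hPd : HasDerivAt (fun τ : ℝ => Real.sqrt π + c * gaussTail (x / Real.sqrt (4 * ν * τ)))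
      (c * (-Real.exp (-((x / s) ^ 2)) * (-(2 * ν * x) / s ^ 3))) t :=
    ((hG.const_mul c).const_add (Real.sqrt π))
  have hden : HasDerivAt (fun τ : ℝ => Real.sqrt (4 * ν * τ)
        * (Real.sqrt π + c * gaussTail (x / Real.sqrt (4 * ν * τ))))
      (2 * ν / s * (Real.sqrt π + c * gaussTail (x / s))
        + s * (c * (-Real.exp (-((x / s) ^ 2)) * (-(2 * ν * x) / s ^ 3)))) t := by
    simpa [← hsdef] using hsder.fun_mul hPd
  have hnum := hE0.const_mul (2 * ν * c)
  have hdiv := hnum.fun_div hden (mul_ne_zero hs.ne' hP)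
  refine hdiv.congr_deriv ?_
  rw [← hsdef]
  field_simp
  ring

set_option maxHeartbeats 2000000 in
/-- Whitham's self-similar solution `u(x,t) = √(2M/t) g(x/√(2Mt), R)` with
`R = M/(2ν)` solves the Burgers equation `u_t + u u_x = ν u_xx` for `t > 0`. -/
theorem whitham_solves_burgers (M ν : ℝ) (hM : 0 < M) (hν : 0 < ν)
    (R : ℝ) (hR : R = M / (2 * ν))
    (g : ℝ → ℝ)
    (hg : ∀ z : ℝ, g z =
      ((Real.exp R - 1) / (2 * Real.sqrt R)) * Real.exp (-(z ^ 2 * R))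
        / (Real.sqrt π
            + (Real.exp R - 1) * ∫ ξ in Set.Ioi (z * Real.sqrt R), Real.exp (-(ξ ^ 2))))
    (u : ℝ → ℝ → ℝ)
    (hu : ∀ x t : ℝ, u x t = Real.sqrt (2 * M / t) * g (x / Real.sqrt (2 * M * t))) :
    ∀ (x t : ℝ), 0 < t →
      deriv (fun s => u x s) t + u x t * deriv (fun y => u y t) x
        = ν * deriv (fun y => deriv (fun z => u z t) y) x := by
  have hRpos : 0 < R := by rw [hR]; positivity
  have hcpos : (0:ℝ) < Real.exp R - 1 := by
    linarith [Real.add_one_lt_exp (ne_of_gt hRpos)]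
  have key : ∀ y τ : ℝ, 0 < τ → u y τ =
      2 * ν * (Real.exp R - 1) * Real.exp (-((y / Real.sqrt (4 * ν * τ)) ^ 2))
        / (Real.sqrt (4 * ν * τ)
            * (Real.sqrt π + (Real.exp R - 1) * gaussTail (y / Real.sqrt (4 * ν * τ)))) := by
    intro y τ hτ
    have hsq : (0:ℝ) < Real.sqrt (2 * M * τ) := Real.sqrt_pos.mpr (by positivity)
    have hs4 : (0:ℝ) < Real.sqrt (4 * ν * τ) := Real.sqrt_pos.mpr (by positivity)
    have hsR : (0:ℝ) < Real.sqrt R := Real.sqrt_pos.mpr hRpos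
    have hmul : Real.sqrt R * Real.sqrt (4 * ν * τ) = Real.sqrt (2 * M * τ) := by
      rw [← Real.sqrt_mul hRpos.le]
      congr 1
      rw [hR]; field_simp; ring
    have hzR : (y / Real.sqrt (2 * M * τ)) * Real.sqrt R = y / Real.sqrt (4 * ν * τ) := by
      rw [← hmul]
      field_simp
    have hz2 : (y / Real.sqrt (2 * M * τ)) ^ 2 * R = (y / Real.sqrt (4 * ν * τ)) ^ 2 := by
      rw [← hzR, mul_pow, Real.sq_sqrt hRpos.le]
    have hpre : Real.sqrt (2 * M / τ) / (2 * Real.sqrt R)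
        = 2 * ν / Real.sqrt (4 * ν * τ) := by
      rw [div_eq_div_iff (by positivity) hs4.ne']
      rw [← Real.sqrt_mul (by positivity)]
      have h4 : 2 * ν * (2 * Real.sqrt R) = Real.sqrt ((4 * ν) ^ 2 * R) := by
        rw [Real.sqrt_mul (by positivity), Real.sqrt_sq (by positivity)]; ring
      rw [h4]
      congr 1
      rw [hR]; field_simp; ring
    rw [hu, hg, hzR, hz2, ← gaussTail_def]
    rw [show Real.sqrt (2 * M / τ) *
          ((Real.exp R - 1) / (2 * Real.sqrt R) * Real.exp (-((y / Real.sqrt (4 * ν * τ)) ^ 2))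
            / (Real.sqrt π + (Real.exp R - 1) * gaussTail (y / Real.sqrt (4 * ν * τ))))
        = (Real.sqrt (2 * M / τ) / (2 * Real.sqrt R)) *
          ((Real.exp R - 1) * Real.exp (-((y / Real.sqrt (4 * ν * τ)) ^ 2))
            / (Real.sqrt π + (Real.exp R - 1) * gaussTail (y / Real.sqrt (4 * ν * τ))))
        from by ring, hpre]
    have hD : (0:ℝ) < Real.sqrt π
        + (Real.exp R - 1) * gaussTail (y / Real.sqrt (4 * ν * τ)) :=
      add_pos_of_pos_of_nonneg (Real.sqrt_pos.mpr Real.pi_pos)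
        (mul_nonneg hcpos.le (gaussTail_nonneg _))
    field_simp
  intro x t ht
  have hs : (0:ℝ) < Real.sqrt (4 * ν * t) := Real.sqrt_pos.mpr (by positivity)
  have hP : ∀ y : ℝ, (0:ℝ) < Real.sqrt π
      + (Real.exp R - 1) * gaussTail (y / Real.sqrt (4 * ν * t)) := fun y =>
    add_pos_of_pos_of_nonneg (Real.sqrt_pos.mpr Real.pi_pos)
      (mul_nonneg hcpos.le (gaussTail_nonneg _))
  have hfun : (fun z => u z t) = (fun z =>
      2 * ν * (Real.exp R - 1) * Real.exp (-((z / Real.sqrt (4 * ν * t)) ^ 2))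
        / (Real.sqrt (4 * ν * t)
            * (Real.sqrt π + (Real.exp R - 1) * gaussTail (z / Real.sqrt (4 * ν * t))))) :=
    funext fun z => key z t ht
  have hD1 : ∀ y : ℝ, deriv (fun z => u z t) y =
      2 * ν * (Real.exp R - 1) * ((Real.exp R - 1)
            * Real.exp (-((y / Real.sqrt (4 * ν * t)) ^ 2)) ^ 2
          - 2 * (y / Real.sqrt (4 * ν * t)) * Real.exp (-((y / Real.sqrt (4 * ν * t)) ^ 2))
            * (Real.sqrt π + (Real.exp R - 1) * gaussTail (y / Real.sqrt (4 * ν * t))))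
        / (Real.sqrt (4 * ν * t) ^ 2
          * (Real.sqrt π + (Real.exp R - 1) * gaussTail (y / Real.sqrt (4 * ν * t))) ^ 2) := by
    intro y
    rw [hfun]
    exact (whitham_deriv_x ν (Real.exp R - 1) (Real.sqrt (4 * ν * t)) hs.ne' y
      (hP y).ne').deriv
  have hfun2 : (fun y => deriv (fun z => u z t) y) = (fun y =>
      2 * ν * (Real.exp R - 1) * ((Real.exp R - 1)
            * Real.exp (-((y / Real.sqrt (4 * ν * t)) ^ 2)) ^ 2
          - 2 * (y / Real.sqrt (4 * ν * t)) * Real.exp (-((y / Real.sqrt (4 * ν * t)) ^ 2))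
            * (Real.sqrt π + (Real.exp R - 1) * gaussTail (y / Real.sqrt (4 * ν * t))))
        / (Real.sqrt (4 * ν * t) ^ 2
          * (Real.sqrt π + (Real.exp R - 1) * gaussTail (y / Real.sqrt (4 * ν * t))) ^ 2)) :=
    funext hD1
  have hT : deriv (fun τ => u x τ) t =
      4 * ν ^ 2 * (Real.exp R - 1) * Real.exp (-((x / Real.sqrt (4 * ν * t)) ^ 2))
          * (2 * (x / Real.sqrt (4 * ν * t)) ^ 2
                * (Real.sqrt π + (Real.exp R - 1) * gaussTail (x / Real.sqrt (4 * ν * t)))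
              - (Real.sqrt π + (Real.exp R - 1) * gaussTail (x / Real.sqrt (4 * ν * t)))
              - (Real.exp R - 1) * (x / Real.sqrt (4 * ν * t))
                * Real.exp (-((x / Real.sqrt (4 * ν * t)) ^ 2)))
        / (Real.sqrt (4 * ν * t) ^ 3
            * (Real.sqrt π
              + (Real.exp R - 1) * gaussTail (x / Real.sqrt (4 * ν * t))) ^ 2) := by
    have hev : (fun τ => u x τ) =ᶠ[nhds t] (fun τ =>
        2 * ν * (Real.exp R - 1) * Real.exp (-((x / Real.sqrt (4 * ν * τ)) ^ 2))
          / (Real.sqrt (4 * ν * τ)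
              * (Real.sqrt π + (Real.exp R - 1) * gaussTail (x / Real.sqrt (4 * ν * τ))))) := by
      filter_upwards [Ioi_mem_nhds ht] with τ hτ
      exact key x τ hτ
    rw [hev.deriv_eq]
    exact (whitham_deriv_t ν (Real.exp R - 1) x t hν ht (hP x).ne').deriv
  rw [hT, hD1 x, hfun2, key x t ht,
    (whitham_deriv_xx ν (Real.exp R - 1) (Real.sqrt (4 * ν * t)) hs.ne' x (hP x).ne').deriv]
  have hPx := hP x
  set s := Real.sqrt (4 * ν * t) with hsdef
  set w := x / s with hwdef
  set c := Real.exp R - 1 with hcdef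
  set G := gaussTail w with hGdef
  set E := Real.exp (-(w ^ 2)) with hEdef
  have hsne : s ≠ 0 := hs.ne'
  have hPne : Real.sqrt π + c * G ≠ 0 := hPx.ne'
  field_simp
  ring
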